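/- Let (X,d) be a finite metric space and let E ⊆ X be constructed greedily: start with any point, and at each step add a point of X whose distance to the current set E is maximal, until |E| = k. Then assigning every point of X to its nearest point in E gives k clusters whose maximum radius is at most twice the optimal k-center radius, i.e., max_{x∈X} d(x, E) ≤ 2·r_opt, where r_opt = min over all k-point subsets C ⊆ X of max_{x∈X} d(x, C). -/

import Mathlib

/-- Gonzalez's greedy algorithm is a 2-approximation for k-center: if the
centers `c 0, …, c (k-1)` are chosen so that each `c i` (for `1 ≤ i < k`) is a
farthest point from the previously chosen centers, then every point is within
distance `2 · r_opt` of the chosen centers, where `r_opt` is the optimal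
k-center radius. -/
theorem gonzalez_two_approx
    {X : Type*} [MetricSpace X] [Fintype X] [Nonempty X]
    (k : ℕ) (hk : 1 ≤ k) (c : ℕ → X)
    (hgreedy : ∀ i : ℕ, 1 ≤ i → i < k → ∀ x : X,
      Metric.infDist x (c '' {j : ℕ | j < i}) ≤
        Metric.infDist (c i) (c '' {j : ℕ | j < i}))
    (ropt : ℝ)
    (hropt : IsLeast {v : ℝ | ∃ C : Finset X, C.card = k ∧
      ∀ x : X, Metric.infDist x (C : Set X) ≤ v} ropt) :
    ∀ x : X, Metric.infDist x (c '' {j : ℕ | j < k}) ≤ 2 * ropt := by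
  obtain ⟨⟨C, hCcard, hC⟩, -⟩ := hropt
  intro x
  classical
  set E : Set X := c '' {j : ℕ | j < k} with hEdef
  set f : ℕ → X := fun i => if i < k then c i else x with hf
  have key : ∀ i j : ℕ, i < j → j ≤ k → Metric.infDist x E ≤ dist (f i) (f j) := by
    intro i j hij hjk
    have hik : i < k := lt_of_lt_of_le hij hjk
    have hfi : f i = c i := if_pos hik
    rcases eq_or_lt_of_le hjk with h | h
    · have hfj : f j = x := by simp [hf, h]
      rw [hfi, hfj, dist_comm]
      exact Metric.infDist_le_dist_of_mem ⟨i, hik, rfl⟩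
    · have hfj : f j = c j := if_pos h
      have hsub : c '' {m : ℕ | m < j} ⊆ E :=
        Set.image_mono (fun m hm => lt_trans hm h)
      have hne : (c '' {m : ℕ | m < j}).Nonempty :=
        ⟨c 0, 0, lt_of_le_of_lt (Nat.zero_le i) hij, rfl⟩
      calc Metric.infDist x E ≤ Metric.infDist x (c '' {m : ℕ | m < j}) :=
            Metric.infDist_le_infDist_of_subset hsub hne
        _ ≤ Metric.infDist (c j) (c '' {m : ℕ | m < j}) :=
            hgreedy j (by omega) h x
        _ ≤ dist (c j) (c i) := Metric.infDist_le_dist_of_mem ⟨i, hij, rfl⟩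
        _ = dist (f i) (f j) := by rw [hfi, hfj, dist_comm]
  have hCne : (C : Set X).Nonempty := by
    rw [Finset.coe_nonempty, ← Finset.card_pos, hCcard]; omega
  have hchoice : ∀ i : Fin (k + 1), ∃ z : C, dist (f i) (z : X) ≤ ropt := by
    intro i
    obtain ⟨z, hz, hdz⟩ :=
      (C.finite_toSet.isCompact).exists_infDist_eq_dist hCne (f i)
    exact ⟨⟨z, hz⟩, by rw [← hdz]; exact hC (f i)⟩
  choose g hg using hchoice
  obtain ⟨a, b, hab, hgab⟩ := Fintype.exists_ne_map_eq_of_card_lt g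
    (by simp [Fintype.card_coe, hCcard])
  have main : ∀ a b : Fin (k + 1), (a : ℕ) < (b : ℕ) → g a = g b →
      Metric.infDist x E ≤ 2 * ropt := by
    intro a b hlt heq
    calc Metric.infDist x E ≤ dist (f a) (f b) :=
          key a b hlt (Nat.lt_succ_iff.mp b.isLt)
      _ ≤ dist (f a) (g a : X) + dist (g a : X) (f b) := dist_triangle _ _ _
      _ ≤ ropt + ropt := add_le_add (hg a) (by rw [heq, dist_comm]; exact hg b)
      _ = 2 * ropt := by ring
  rcases lt_or_gt_of_ne hab with h | h
  · exact main a b h hgab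
  · exact main b a h hgab.symm
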